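/- arXiv:1307.6427 — 4 statements merged into one kernel-verified Lean document; each statement's English description precedes it below -/
import Mathlib

section
/- Let m ≥ 2 be an integer and γ > m - 1. For the discretization T_k = T(1 - (1 - k/N)^γ), there exists a constant C > 0 (depending on T, γ, m but not N) such that for all N ≥ 2, the sum over j from 0 to N-2 of Δ_{T_{j+1}}^{(m+1)/2} (T - T_j)^{-m/2} is bounded by C N^{-(m-1)/2}. -/
open Real Finset

/-- Convex side: for `p ≥ 1`, `b^p - a^p ≤ p b^{p-1} (b-a)`. -/
lemma aux_rpow_sub_le {p a b : ℝ} (hp : 1 ≤ p) (ha : 0 ≤ a) (hab : a ≤ b) :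
    b ^ p - a ^ p ≤ p * b ^ (p - 1) * (b - a) := by
  have hb : 0 ≤ b := ha.trans hab
  rcases eq_or_lt_of_le hb with hb0 | hb0
  · have ha0 : a = 0 := le_antisymm (hab.trans_eq hb0.symm) ha
    subst ha0
    rw [← hb0]
    simp
  · have key := one_add_mul_self_le_rpow_one_add (s := a / b - 1)
      (by have h0 : 0 ≤ a / b := by positivity
          linarith) hp
    rw [show (1:ℝ) + (a / b - 1) = a / b by ring] at key
    have h2 : (a / b) ^ p = a ^ p / b ^ p := Real.div_rpow ha hb0.le p
    have hbp : (0 : ℝ) < b ^ p := Real.rpow_pos_of_pos hb0 p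
    have hbb : b ^ (p - 1) * b = b ^ p := by
      rw [← Real.rpow_add_one hb0.ne' (p - 1)]; ring_nf
    have h4 : (a / b - 1) * b ^ p = (a - b) * b ^ (p - 1) := by
      rw [← hbb]; field_simp
    have h3 : b ^ p + p * ((a - b) * b ^ (p - 1)) ≤ a ^ p := by
      calc b ^ p + p * ((a - b) * b ^ (p - 1))
          = (1 + p * (a / b - 1)) * b ^ p := by rw [← h4]; ring
        _ ≤ (a / b) ^ p * b ^ p := mul_le_mul_of_nonneg_right key hbp.le
        _ = a ^ p := by rw [h2, div_mul_cancel₀ _ hbp.ne']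
    nlinarith [h3]

/-- Concave side: for `0 < p ≤ 1`, `p b^{p-1} (b-a) ≤ b^p - a^p`. -/
lemma aux_le_rpow_sub {p a b : ℝ} (hp0 : 0 ≤ p) (hp : p ≤ 1) (ha : 0 ≤ a) (hab : a ≤ b) :
    p * b ^ (p - 1) * (b - a) ≤ b ^ p - a ^ p := by
  have hb : 0 ≤ b := ha.trans hab
  rcases eq_or_lt_of_le hb with hb0 | hb0
  · have ha0 : a = 0 := le_antisymm (hab.trans_eq hb0.symm) ha
    subst ha0
    rw [← hb0]
    simp
  · have key := rpow_one_add_le_one_add_mul_self (s := a / b - 1)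
      (by have h0 : 0 ≤ a / b := by positivity
          linarith) hp0 hp
    rw [show (1:ℝ) + (a / b - 1) = a / b by ring] at key
    have h2 : (a / b) ^ p = a ^ p / b ^ p := Real.div_rpow ha hb0.le p
    have hbp : (0 : ℝ) < b ^ p := Real.rpow_pos_of_pos hb0 p
    have hbb : b ^ (p - 1) * b = b ^ p := by
      rw [← Real.rpow_add_one hb0.ne' (p - 1)]; ring_nf
    have h4 : (a / b - 1) * b ^ p = (a - b) * b ^ (p - 1) := by
      rw [← hbb]; field_simp
    have h3 : a ^ p ≤ b ^ p + p * ((a - b) * b ^ (p - 1)) := by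
      calc a ^ p = (a / b) ^ p * b ^ p := by rw [h2, div_mul_cancel₀ _ hbp.ne']
        _ ≤ (1 + p * (a / b - 1)) * b ^ p := mul_le_mul_of_nonneg_right key hbp.le
        _ = b ^ p + p * ((a - b) * b ^ (p - 1)) := by rw [← h4]; ring
    nlinarith [h3]

/-- `∑_{k=1}^N k^α ≤ C N^{α+1}` for `α > -1`. -/
lemma aux_sum_rpow {α : ℝ} (hα : -1 < α) :
    ∃ C : ℝ, 0 < C ∧ ∀ N : ℕ,
      ∑ k ∈ Finset.range N, ((k : ℝ) + 1) ^ α ≤ C * (N : ℝ) ^ (α + 1) := by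
  rcases le_or_gt 0 α with h0 | h0
  · refine ⟨1, one_pos, fun N => ?_⟩
    rcases Nat.eq_zero_or_pos N with rfl | hN
    · simp [Real.zero_rpow (by linarith : α + 1 ≠ 0)]
    have hN0 : (0 : ℝ) < N := by exact_mod_cast hN
    calc ∑ k ∈ Finset.range N, ((k : ℝ) + 1) ^ α
        ≤ ∑ _k ∈ Finset.range N, (N : ℝ) ^ α := by
          refine Finset.sum_le_sum fun k hk => ?_
          refine Real.rpow_le_rpow (by positivity) ?_ h0
          have : k + 1 ≤ N := Finset.mem_range.mp hk
          exact_mod_cast this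
      _ = (N : ℝ) * (N : ℝ) ^ α := by
          rw [Finset.sum_const, Finset.card_range, nsmul_eq_mul]
      _ = 1 * (N : ℝ) ^ (α + 1) := by
          rw [one_mul, add_comm, Real.rpow_add hN0, Real.rpow_one]
  · have hp0 : 0 < α + 1 := by linarith
    refine ⟨1 / (α + 1), by positivity, fun N => ?_⟩
    induction N with
    | zero => simp [Real.zero_rpow hp0.ne']
    | succ n ih =>
      rw [Finset.sum_range_succ]
      have key := aux_le_rpow_sub (p := α + 1) hp0.le (by linarith)
        (a := (n : ℝ)) (b := (n : ℝ) + 1) (by positivity) (by linarith)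
      rw [add_sub_cancel_right, show (n : ℝ) + 1 - n = 1 by ring, mul_one] at key
      -- key : (α+1) * ((n:ℝ)+1) ^ α ≤ ((n:ℝ)+1)^(α+1) - (n:ℝ)^(α+1)
      have h5 : ((n : ℝ) + 1) ^ α ≤ 1 / (α + 1) * (((n : ℝ) + 1) ^ (α + 1) - (n : ℝ) ^ (α + 1)) := by
        rw [show (1:ℝ) / (α + 1) * (((n : ℝ) + 1) ^ (α + 1) - (n : ℝ) ^ (α + 1))
          = (((n : ℝ) + 1) ^ (α + 1) - (n : ℝ) ^ (α + 1)) / (α + 1) by ring, le_div_iff₀ hp0]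
        nlinarith [key]
      push_cast
      linarith [ih, h5]

/-- Let `m ≥ 2` be an integer and `γ > m - 1`.  For the discretization
`T_k = T(1-(1-k/N)^γ)` there is a constant `C > 0` (independent of `N`) such that
`Σ_{j=0}^{N-2} Δ_{T_{j+1}}^{(m+1)/2} (T - T_j)^{-m/2} ≤ C N^{-(m-1)/2}` for all `N ≥ 2`. -/
theorem stmt_3 (T : ℝ) (hT : 0 < T) (m : ℕ) (hm : 2 ≤ m) (γ : ℝ) (hγ : (m : ℝ) - 1 < γ)
    (Tk : ℕ → ℕ → ℝ)
    (hTk : ∀ N k, Tk N k = T * (1 - (1 - (k : ℝ) / (N : ℝ)) ^ γ)) :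
    ∃ C : ℝ, 0 < C ∧ ∀ N : ℕ, 2 ≤ N →
      ∑ j ∈ Finset.range (N - 1),
          (Tk N (j + 1) - Tk N j) ^ (((m : ℝ) + 1) / 2) * (T - Tk N j) ^ (-(m : ℝ) / 2)
        ≤ C * (N : ℝ) ^ (-((m : ℝ) - 1) / 2) := by
  have hm1 : (1 : ℝ) ≤ (m : ℝ) - 1 := by
    have : (2 : ℝ) ≤ (m : ℝ) := by exact_mod_cast hm
    linarith
  have hγ1 : 1 ≤ γ := le_of_lt (lt_of_le_of_lt hm1 hγ)
  have hγ0 : 0 < γ := by linarith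
  set q : ℝ := ((m : ℝ) + 1) / 2 with hq
  set r : ℝ := -(m : ℝ) / 2 with hr
  set α : ℝ := (γ - (m : ℝ) - 1) / 2 with hα_def
  have hq0 : 0 ≤ q := by rw [hq]; positivity
  have hα : -1 < α := by rw [hα_def]; linarith
  obtain ⟨C₀, hC₀, hsum⟩ := aux_sum_rpow hα
  refine ⟨(T * γ) ^ q * T ^ r * C₀, by positivity, fun N hN => ?_⟩
  have hN0 : (0 : ℝ) < (N : ℝ) := by exact_mod_cast Nat.lt_of_lt_of_le Nat.zero_lt_two hN
  set n : ℝ := (N : ℝ) with hn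
  set Kt : ℝ := (T * γ) ^ q * T ^ r * n ^ (-q) with hKt
  have key : ∀ j ∈ Finset.range (N - 1),
      (Tk N (j + 1) - Tk N j) ^ q * (T - Tk N j) ^ r ≤ Kt * (1 - (j : ℝ) / n) ^ α := by
    intro j hj
    have hjN : j + 2 ≤ N := by
      have := Finset.mem_range.mp hj; omega
    have hj2 : (j : ℝ) + 2 ≤ n := by rw [hn]; exact_mod_cast hjN
    set b : ℝ := 1 - (j : ℝ) / n with hb_def
    set a : ℝ := 1 - ((j : ℝ) + 1) / n with ha_def
    have hbpos : 0 < b := by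
      rw [hb_def, sub_pos, div_lt_one hN0]; linarith
    have ha : 0 ≤ a := by
      rw [ha_def, sub_nonneg, div_le_one hN0]; linarith
    have hab : a ≤ b := by
      rw [ha_def, hb_def]
      have h : (j : ℝ) / n ≤ ((j : ℝ) + 1) / n := by gcongr <;> linarith
      linarith
    have hba : b - a = 1 / n := by
      rw [ha_def, hb_def]
      field_simp
      ring
    have hTj : T - Tk N j = T * b ^ γ := by rw [hTk, hb_def, hn]; ring
    have hTj1 : Tk N (j + 1) - Tk N j = T * (b ^ γ - a ^ γ) := by
      rw [hTk, hTk, hb_def, ha_def, hn]; push_cast; ring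
    have hDelta : Tk N (j + 1) - Tk N j ≤ T * γ / n * b ^ (γ - 1) := by
      rw [hTj1]
      have h := aux_rpow_sub_le hγ1 ha hab
      rw [hba] at h
      calc T * (b ^ γ - a ^ γ) ≤ T * (γ * b ^ (γ - 1) * (1 / n)) :=
            mul_le_mul_of_nonneg_left h hT.le
        _ = T * γ / n * b ^ (γ - 1) := by ring
    have hDelta0 : 0 ≤ Tk N (j + 1) - Tk N j := by
      rw [hTj1]
      have h := Real.rpow_le_rpow ha hab hγ0.le
      have := sub_nonneg.mpr h
      positivity
    have e1 : (T * γ / n * b ^ (γ - 1)) ^ q = (T * γ) ^ q * n ^ (-q) * b ^ ((γ - 1) * q) := by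
      rw [Real.mul_rpow (by positivity) (Real.rpow_nonneg hbpos.le _),
        Real.div_rpow (by positivity) hN0.le, ← Real.rpow_mul hbpos.le,
        Real.rpow_neg hN0.le, div_eq_mul_inv]
    have e2 : (T * b ^ γ) ^ r = T ^ r * b ^ (γ * r) := by
      rw [Real.mul_rpow hT.le (Real.rpow_nonneg hbpos.le _), ← Real.rpow_mul hbpos.le]
    have e3 : b ^ ((γ - 1) * q) * b ^ (γ * r) = b ^ α := by
      rw [← Real.rpow_add hbpos]
      congr 1
      rw [hq, hr, hα_def]; ring
    calc (Tk N (j + 1) - Tk N j) ^ q * (T - Tk N j) ^ r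
        = (Tk N (j + 1) - Tk N j) ^ q * (T * b ^ γ) ^ r := by rw [hTj]
      _ ≤ (T * γ / n * b ^ (γ - 1)) ^ q * (T * b ^ γ) ^ r := by
          have hX : 0 ≤ (T * b ^ γ) ^ r := Real.rpow_nonneg (by positivity) r
          exact mul_le_mul_of_nonneg_right (Real.rpow_le_rpow hDelta0 hDelta hq0) hX
      _ = Kt * (1 - (j : ℝ) / n) ^ α := by
          rw [e1, e2, hKt, ← hb_def, ← e3]; ring
  calc ∑ j ∈ Finset.range (N - 1),
        (Tk N (j + 1) - Tk N j) ^ q * (T - Tk N j) ^ r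
      ≤ ∑ j ∈ Finset.range (N - 1), Kt * (1 - (j : ℝ) / n) ^ α := Finset.sum_le_sum key
    _ = Kt * ∑ j ∈ Finset.range (N - 1), (1 - (j : ℝ) / n) ^ α := by rw [Finset.mul_sum]
    _ = Kt * ∑ j ∈ Finset.range (N - 1), (((j : ℝ) + 2) / n) ^ α := by
        congr 1
        rw [← Finset.sum_range_reflect]
        refine Finset.sum_congr rfl fun j hj => ?_
        have hj' : j + 2 ≤ N := by have := Finset.mem_range.mp hj; omega
        have h1 : N - 1 - 1 - j = N - (j + 2) := by omega
        have h2 : ((N - (j + 2) : ℕ) : ℝ) = n - ((j : ℝ) + 2) := by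
          rw [Nat.cast_sub hj']; push_cast; rw [hn]
        rw [h1, h2]
        congr 1
        field_simp
        ring
    _ = Kt * (n ^ (-α) * ∑ j ∈ Finset.range (N - 1), ((j : ℝ) + 2) ^ α) := by
        simp only [Finset.mul_sum]
        refine Finset.sum_congr rfl fun j _ => ?_
        rw [Real.div_rpow (by positivity) hN0.le, Real.rpow_neg hN0.le]
        ring
    _ ≤ Kt * (n ^ (-α) * (C₀ * n ^ (α + 1))) := by
        have hKt0 : 0 ≤ Kt := by rw [hKt]; positivity
        have hbound : ∑ j ∈ Finset.range (N - 1), ((j : ℝ) + 2) ^ α ≤ C₀ * n ^ (α + 1) := by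
          refine le_trans ?_ (hsum N)
          obtain ⟨M, rfl⟩ : ∃ M, N = M + 1 := ⟨N - 1, by omega⟩
          rw [Finset.sum_range_succ']
          simp only [Nat.add_sub_cancel]
          have h1 : (0 : ℝ) ≤ ((0 : ℕ) : ℝ) + 1 := by norm_num
          have : ∑ j ∈ Finset.range M, ((j : ℝ) + 2) ^ α
              = ∑ i ∈ Finset.range M, (((i + 1 : ℕ) : ℝ) + 1) ^ α := by
            refine Finset.sum_congr rfl fun i _ => ?_
            congr 1
            push_cast
            ring
          rw [this]
          have h2 : (0 : ℝ) ≤ (((0 : ℕ) : ℝ) + 1) ^ α := Real.rpow_nonneg (by norm_num) α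
          linarith
        have hn' : 0 ≤ n ^ (-α) := Real.rpow_nonneg hN0.le _
        exact mul_le_mul_of_nonneg_left (mul_le_mul_of_nonneg_left hbound hn') hKt0
    _ = (T * γ) ^ q * T ^ r * C₀ * n ^ (-((m : ℝ) - 1) / 2) := by
        have hpow : n ^ (-q) * n ^ (-α) * n ^ (α + 1) = n ^ (-((m : ℝ) - 1) / 2) := by
          rw [← Real.rpow_add hN0, ← Real.rpow_add hN0]
          congr 1
          rw [hq, hα_def]; ring
        rw [hKt, ← hpow]; ring
end

section
/- Let m ≥ 2 and 0 < γ < m - 1. For the discretization T_k = T(1 - (1 - k/N)^γ), there exists a constant C > 0 (depending on T, γ, m but not N) such that the sum over j from 0 to N-2 of Δ_{T_{j+1}}^{(m+1)/2} (T - T_j)^{-m/2} is bounded by C N^{-γ/2} for all N ≥ 2. -/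
open Real Set Finset

lemma rpow_diff_le (γ : ℝ) (hγ : 0 < γ) {y x : ℝ} (hy : 0 < y) (hyx : y < x)
    (hx2 : x ≤ 2 * y) :
    x ^ γ - y ^ γ ≤ 2 * γ * x ^ (γ - 1) * (x - y) := by
  have hx0 : 0 < x := hy.trans hyx
  obtain ⟨c, hc, hceq⟩ := exists_hasDerivAt_eq_slope (fun t => t ^ γ)
    (fun t => γ * t ^ (γ - 1)) hyx
    (fun t ht => (Real.continuousAt_rpow_const t γ (Or.inr hγ.le)).continuousWithinAt)
    (fun t ht => Real.hasDerivAt_rpow_const (Or.inl (show t ≠ 0 from ne_of_gt (hy.trans ht.1))))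
  have hc0 : 0 < c := hy.trans hc.1
  have key : c ^ (γ - 1) ≤ 2 * x ^ (γ - 1) := by
    rcases le_or_gt 1 γ with h1 | h1
    · have h := Real.rpow_le_rpow hc0.le hc.2.le (by linarith : (0:ℝ) ≤ γ - 1)
      nlinarith [Real.rpow_pos_of_pos hx0 (γ - 1)]
    · have h2 : c ^ (γ - 1) ≤ (x / 2) ^ (γ - 1) := by
        apply Real.rpow_le_rpow_of_nonpos (by linarith) (by linarith [hc.1]) (by linarith)
      have h3 : (x / 2) ^ (γ - 1) = x ^ (γ - 1) * (2:ℝ) ^ (1 - γ) := by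
        rw [Real.div_rpow hx0.le (by norm_num), div_eq_mul_inv, ← Real.rpow_neg (by norm_num),
          neg_sub]
      have h4 : (2:ℝ) ^ (1 - γ) ≤ 2 := by
        nth_rewrite 2 [show (2:ℝ) = (2:ℝ) ^ (1:ℝ) by norm_num]
        exact Real.rpow_le_rpow_of_exponent_le (by norm_num) (by linarith)
      have h5 : 0 ≤ x ^ (γ - 1) := Real.rpow_nonneg hx0.le _
      calc c ^ (γ-1) ≤ x ^ (γ-1) * (2:ℝ)^(1-γ) := by rw [← h3]; exact h2
        _ ≤ 2 * x ^ (γ-1) := by nlinarith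
  have hxy : 0 < x - y := by linarith
  have heq : x ^ γ - y ^ γ = γ * c ^ (γ - 1) * (x - y) := by
    field_simp at hceq
    linarith [hceq]
  rw [heq]
  have h6 : γ * c ^ (γ - 1) ≤ γ * (2 * x ^ (γ - 1)) :=
    mul_le_mul_of_nonneg_left key hγ.le
  nlinarith

/-- Let `m ≥ 2` and `0 < γ < m - 1`.  For the discretization `T_k = T(1-(1-k/N)^γ)`
there is a constant `C > 0` (independent of `N`) such that
`Σ_{j=0}^{N-2} Δ_{T_{j+1}}^{(m+1)/2} (T - T_j)^{-m/2} ≤ C N^{-γ/2}` for all `N ≥ 2`. -/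
theorem stmt_4 (T : ℝ) (hT : 0 < T) (m : ℕ) (hm : 2 ≤ m) (γ : ℝ)
    (hγ0 : 0 < γ) (hγ : γ < (m : ℝ) - 1)
    (Tk : ℕ → ℕ → ℝ)
    (hTk : ∀ N k, Tk N k = T * (1 - (1 - (k : ℝ) / (N : ℝ)) ^ γ)) :
    ∃ C : ℝ, 0 < C ∧ ∀ N : ℕ, 2 ≤ N →
      ∑ j ∈ Finset.range (N - 1),
          (Tk N (j + 1) - Tk N j) ^ (((m : ℝ) + 1) / 2) * (T - Tk N j) ^ (-(m : ℝ) / 2)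
        ≤ C * (N : ℝ) ^ (-γ / 2) := by
  set α : ℝ := ((m:ℝ) + 1 - γ) / 2 with hα
  have hα1 : 1 < α := by rw [hα]; push_cast; linarith
  have hsum : Summable (fun k : ℕ => (k:ℝ) ^ (-α)) :=
    Real.summable_nat_rpow.mpr (by linarith)
  set S : ℝ := ∑' k : ℕ, (k:ℝ) ^ (-α) with hS
  have hS0 : 0 ≤ S := tsum_nonneg fun k => Real.rpow_nonneg (Nat.cast_nonneg k) _
  set K : ℝ := (2*T*γ) ^ (((m:ℝ)+1)/2) * T ^ (-(m:ℝ)/2) with hK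
  have hK0 : 0 < K :=
    mul_pos (Real.rpow_pos_of_pos (by positivity) _) (Real.rpow_pos_of_pos hT _)
  refine ⟨K * (S + 1), by positivity, fun N hN => ?_⟩
  set n : ℝ := (N:ℝ) with hn
  have hn2 : (2:ℝ) ≤ n := by rw [hn]; exact_mod_cast hN
  have hn0 : 0 < n := by linarith
  have hNγ : 0 < n ^ (-γ/2) := Real.rpow_pos_of_pos hn0 _
  -- per-term bound
  have hterm : ∀ j ∈ Finset.range (N - 1),
      (Tk N (j + 1) - Tk N j) ^ (((m : ℝ) + 1) / 2) * (T - Tk N j) ^ (-(m : ℝ) / 2)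
        ≤ K * n ^ (-γ/2) * ((N - j : ℕ) : ℝ) ^ (-α) := by
    intro j hj
    rw [Finset.mem_range] at hj
    have hj2 : j + 2 ≤ N := by omega
    have hjr : (j:ℝ) + 2 ≤ n := by rw [hn]; exact_mod_cast hj2
    set u : ℝ := n - (j:ℝ) with hu
    have hu2 : 2 ≤ u := by rw [hu]; linarith
    have hu0 : 0 < u := by linarith
    set x : ℝ := u / n with hx'
    set y : ℝ := (u - 1) / n with hy'
    have hx0 : 0 < x := by rw [hx']; positivity
    have hy0 : 0 < y := by rw [hy']; apply div_pos (by linarith) hn0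
    have hNne : (N:ℝ) ≠ 0 := by rw [← hn]; exact hn0.ne'
    have hyx : y < x := by
      rw [hx', hy']; gcongr; linarith
    have hx2 : x ≤ 2 * y := by
      rw [hx', hy']
      have h : u / n ≤ (2*u - 2) / n := by gcongr <;> linarith
      calc u / n ≤ (2*u-2)/n := h
        _ = 2 * ((u-1)/n) := by ring
    have hxeq : 1 - (j:ℝ)/(N:ℝ) = x := by
      rw [hx', hu, hn]; field_simp
    have hyeq : 1 - ((j:ℝ)+1)/(N:ℝ) = y := by
      rw [hy', hu, hn]; field_simp; ring
    have hTxγ : T - Tk N j = T * x ^ γ := by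
      rw [hTk, hxeq]; ring
    have hΔeq : Tk N (j+1) - Tk N j = T * (x ^ γ - y ^ γ) := by
      rw [hTk, hTk]; push_cast; rw [hxeq, hyeq]; ring
    have hΔle : T * (x^γ - y^γ) ≤ 2*T*γ/n * x^(γ-1) := by
      have h := rpow_diff_le γ hγ0 hy0 hyx hx2
      have hxy1 : x - y = 1/n := by rw [hx', hy']; field_simp; ring
      rw [hxy1] at h
      calc T * (x^γ - y^γ) ≤ T * (2*γ*x^(γ-1)*(1/n)) := mul_le_mul_of_nonneg_left h hT.le
        _ = 2*T*γ/n * x^(γ-1) := by ring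
    have hΔ0 : 0 ≤ T * (x^γ - y^γ) := by
      have := Real.rpow_le_rpow hy0.le hyx.le hγ0.le
      nlinarith
    have step1 : (T*(x^γ-y^γ))^(((m:ℝ)+1)/2) ≤ (2*T*γ/n * x^(γ-1))^(((m:ℝ)+1)/2) :=
      Real.rpow_le_rpow hΔ0 hΔle (by positivity)
    have hB0 : 0 ≤ (T*x^γ)^(-(m:ℝ)/2) := Real.rpow_nonneg (by positivity) _
    have e1 : (2*T*γ/n * x^(γ-1))^(((m:ℝ)+1)/2)
        = (2*T*γ)^(((m:ℝ)+1)/2) * n^(-(((m:ℝ)+1)/2)) * x^((γ-1)*(((m:ℝ)+1)/2)) := by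
      rw [Real.mul_rpow (by positivity) (Real.rpow_nonneg hx0.le _),
        Real.div_rpow (by positivity) hn0.le, ← Real.rpow_mul hx0.le,
        div_eq_mul_inv, ← Real.rpow_neg hn0.le]
    have e2 : (T*x^γ)^(-(m:ℝ)/2) = T^(-(m:ℝ)/2) * x^(γ * (-(m:ℝ)/2)) := by
      rw [Real.mul_rpow hT.le (Real.rpow_nonneg hx0.le _), ← Real.rpow_mul hx0.le]
    have e3 : x^((γ-1)*(((m:ℝ)+1)/2)) * x^(γ*(-(m:ℝ)/2)) = x^(-α) := by
      rw [← Real.rpow_add hx0]; congr 1; rw [hα]; ring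
    have e4 : x^(-α) = u^(-α) * n^α := by
      rw [hx', Real.div_rpow hu0.le hn0.le, div_eq_mul_inv, ← Real.rpow_neg hn0.le, neg_neg]
    have e5 : n^α * n^(-(((m:ℝ)+1)/2)) = n^(-γ/2) := by
      rw [← Real.rpow_add hn0]; congr 1; rw [hα]; ring
    have hcast : ((N - j : ℕ) : ℝ) = u := by
      rw [hu, hn, Nat.cast_sub (by omega)]
    calc (Tk N (j + 1) - Tk N j) ^ (((m : ℝ) + 1) / 2) * (T - Tk N j) ^ (-(m : ℝ) / 2)
        = (T*(x^γ-y^γ))^(((m:ℝ)+1)/2) * (T*x^γ)^(-(m:ℝ)/2) := by rw [hΔeq, hTxγ]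
      _ ≤ (2*T*γ/n * x^(γ-1))^(((m:ℝ)+1)/2) * (T*x^γ)^(-(m:ℝ)/2) :=
          mul_le_mul_of_nonneg_right step1 hB0
      _ = (2*T*γ)^(((m:ℝ)+1)/2) * T^(-(m:ℝ)/2)
            * (x^((γ-1)*(((m:ℝ)+1)/2)) * x^(γ*(-(m:ℝ)/2))) * n^(-(((m:ℝ)+1)/2)) := by
          rw [e1, e2]; ring
      _ = K * (u^(-α) * n^α) * n^(-(((m:ℝ)+1)/2)) := by rw [e3, e4, hK]
      _ = K * (n^α * n^(-(((m:ℝ)+1)/2))) * u^(-α) := by ring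
      _ = K * n^(-γ/2) * u^(-α) := by rw [e5]
      _ = K * n^(-γ/2) * ((N - j : ℕ) : ℝ)^(-α) := by rw [hcast]
  calc ∑ j ∈ Finset.range (N - 1),
        (Tk N (j + 1) - Tk N j) ^ (((m : ℝ) + 1) / 2) * (T - Tk N j) ^ (-(m : ℝ) / 2)
      ≤ ∑ j ∈ Finset.range (N - 1), K * n ^ (-γ/2) * ((N - j : ℕ) : ℝ) ^ (-α) :=
        Finset.sum_le_sum hterm
    _ = K * n ^ (-γ/2) * ∑ j ∈ Finset.range (N - 1), ((N - j : ℕ) : ℝ) ^ (-α) := by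
        rw [← Finset.mul_sum]
    _ ≤ K * n ^ (-γ/2) * S := by
        apply mul_le_mul_of_nonneg_left ?_ (by positivity)
        have hinj : ∀ a ∈ Finset.range (N-1), ∀ b ∈ Finset.range (N-1),
            N - a = N - b → a = b := by
          intro a ha b hb h
          rw [Finset.mem_range] at ha hb; omega
        have himg := Finset.sum_image (f := fun i : ℕ => (i:ℝ) ^ (-α))
          (g := fun j => N - j) (s := Finset.range (N-1)) hinj
        rw [← himg]
        exact Summable.sum_le_tsum _ (fun i _ => Real.rpow_nonneg (Nat.cast_nonneg i) _) hsum
    _ ≤ K * (S + 1) * n ^ (-γ/2) := by nlinarith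
end

section
/- Let F be the cumulative distribution function of the standard normal distribution and K > 0. Define, for t < 1 and y ∈ ℝ, U(t,y) = √((1−t)/(2π)) [exp(−(K+y)²/(2(1−t))) + exp(−(K−y)²/(2(1−t))) − 2exp(−y²/(2(1−t)))] + (K+y)[F(−y/√(1−t)) − F((−K−y)/√(1−t))] + (K−y)[F((K−y)/√(1−t)) − F(−y/√(1−t))]. Then as t → 1⁻, U(t,y) converges to φ'(y), where φ' is the triangular function φ'(y) = y+K for y ∈ (−K,0], φ'(y) = −y+K for y ∈ (0,K], and φ'(y) = 0 otherwise. -/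
open Real Filter Topology

/-- For the standard normal cdf `F` and `K > 0`, the explicit heat-semigroup formula
`U(t,y)` converges, as `t → 1⁻`, to the triangular function `φ'(y)`. -/
theorem stmt_15 (K : ℝ) (hK : 0 < K)
    (F : ℝ → ℝ)
    (hF : ∀ x, F x = ∫ u in Set.Iic x, (1 / Real.sqrt (2 * Real.pi)) * Real.exp (-u ^ 2 / 2))
    (phi : ℝ → ℝ)
    (hphi : ∀ y, phi y =
      if -K < y ∧ y ≤ 0 then y + K else if 0 < y ∧ y ≤ K then -y + K else 0)
    (U : ℝ → ℝ → ℝ)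
    (hU : ∀ t y, t < 1 → U t y =
      Real.sqrt ((1 - t) / (2 * Real.pi)) *
          (Real.exp (-(K + y) ^ 2 / (2 * (1 - t))) + Real.exp (-(K - y) ^ 2 / (2 * (1 - t)))
            - 2 * Real.exp (-y ^ 2 / (2 * (1 - t))))
        + (K + y) * (F (-y / Real.sqrt (1 - t)) - F ((-K - y) / Real.sqrt (1 - t)))
        + (K - y) * (F ((K - y) / Real.sqrt (1 - t)) - F (-y / Real.sqrt (1 - t)))) :
    ∀ y : ℝ, Tendsto (fun t => U t y) (nhdsWithin 1 (Set.Iio 1)) (nhds (phi y)) := by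
  have h2π : (0:ℝ) < 2 * Real.pi := by positivity
  set g : ℝ → ℝ := fun u => (1 / Real.sqrt (2 * Real.pi)) * Real.exp (-u ^ 2 / 2) with hg
  have hexp_eq : (fun u : ℝ => Real.exp (-u ^ 2 / 2)) =
      fun u : ℝ => Real.exp (-(1/2 : ℝ) * u ^ 2) := by
    funext u; ring_nf
  have hint0 : MeasureTheory.Integrable (fun u : ℝ => Real.exp (-u ^ 2 / 2)) := by
    rw [hexp_eq]
    exact integrable_exp_neg_mul_sq (by norm_num)
  have hgi : MeasureTheory.Integrable g := hint0.const_mul _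
  have hsne : Real.sqrt (2 * Real.pi) ≠ 0 := by positivity
  have htot : (∫ u, g u) = 1 := by
    rw [hg]
    rw [MeasureTheory.integral_const_mul]
    rw [hexp_eq, integral_gaussian]
    rw [show Real.pi / (1/2 : ℝ) = 2 * Real.pi by ring]
    field_simp
  -- F tends to 1 at +∞
  have hFfun : F = fun x => ∫ u in Set.Iic x, g u := by
    funext x; rw [hF x]
  have hFtop : Tendsto F atTop (𝓝 1) := by
    rw [hFfun]
    have h := MeasureTheory.tendsto_setIntegral_of_monotone
      (s := fun x : ℝ => Set.Iic x) (f := g) (μ := MeasureTheory.volume)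
      (fun x => measurableSet_Iic) (fun a b hab => Set.Iic_subset_Iic.mpr hab)
      (by rw [Set.iUnion_Iic]; exact hgi.integrableOn)
    rw [Set.iUnion_Iic, MeasureTheory.setIntegral_univ, htot] at h
    exact h
  -- F tends to 0 at −∞
  have hFbot : Tendsto F atBot (𝓝 0) := by
    rw [hFfun]
    have hempty : (⋂ x : ℝ, Set.Iic (-x)) = ∅ := by
      apply Set.eq_empty_iff_forall_notMem.mpr
      intro u hu
      have := Set.mem_iInter.mp hu (1 - u)
      simp only [Set.mem_Iic] at this
      linarith
    have h := MeasureTheory.tendsto_setIntegral_of_antitone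
      (s := fun x : ℝ => Set.Iic (-x)) (f := g) (μ := MeasureTheory.volume)
      (fun x => measurableSet_Iic)
      (fun a b hab => Set.Iic_subset_Iic.mpr (by linarith))
      ⟨0, hgi.integrableOn⟩
    rw [hempty, MeasureTheory.setIntegral_empty] at h
    have h2 := h.comp tendsto_neg_atBot_atTop
    exact h2.congr fun x => by simp [Function.comp]
  -- F 0 = 1/2
  have hF0 : F 0 = 1/2 := by
    rw [hF 0]
    have hsymm : (∫ u in Set.Iic (0:ℝ), g u) = ∫ u in Set.Ioi (0:ℝ), g u := by
      have h := integral_comp_neg_Iic (0:ℝ) g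
      rw [neg_zero] at h
      rw [← h]
      apply MeasureTheory.setIntegral_congr_fun measurableSet_Iic
      intro u _
      simp [hg, neg_sq]
    have hsum : (∫ u in Set.Iic (0:ℝ), g u) + ∫ u in Set.Ioi (0:ℝ), g u = 1 := by
      rw [← htot]
      exact intervalIntegral.integral_Iic_add_Ioi hgi.integrableOn hgi.integrableOn
    show (∫ u in Set.Iic (0:ℝ), g u) = 1/2
    linarith
  -- limits of the scaled argument
  have hσ0 : Tendsto (fun t : ℝ => Real.sqrt (1 - t)) (nhdsWithin 1 (Set.Iio 1)) (𝓝 0) := by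
    have hc : ContinuousAt (fun t : ℝ => Real.sqrt (1 - t)) 1 :=
      (Real.continuous_sqrt.comp (continuous_const.sub continuous_id)).continuousAt
    have := hc.tendsto.mono_left (nhdsWithin_le_nhds (s := Set.Iio 1))
    simpa using this
  have hσ : Tendsto (fun t : ℝ => Real.sqrt (1 - t)) (nhdsWithin 1 (Set.Iio 1))
      (nhdsWithin 0 (Set.Ioi 0)) := by
    rw [tendsto_nhdsWithin_iff]
    refine ⟨hσ0, ?_⟩
    filter_upwards [self_mem_nhdsWithin] with t ht
    exact Set.mem_Ioi.mpr (Real.sqrt_pos.mpr (by simpa [sub_pos] using ht))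
  have hinv : Tendsto (fun t : ℝ => (Real.sqrt (1 - t))⁻¹) (nhdsWithin 1 (Set.Iio 1)) atTop :=
    tendsto_inv_nhdsGT_zero.comp hσ
  -- limit of F(c/√(1−t))
  have hFc : ∀ c : ℝ, Tendsto (fun t => F (c / Real.sqrt (1 - t)))
      (nhdsWithin 1 (Set.Iio 1))
      (𝓝 (if 0 < c then 1 else if c < 0 then 0 else 1/2)) := by
    intro c
    rcases lt_trichotomy c 0 with hc | hc | hc
    · rw [if_neg (by linarith), if_pos hc]
      have harg : Tendsto (fun t : ℝ => c / Real.sqrt (1 - t))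
          (nhdsWithin 1 (Set.Iio 1)) atBot := by
        simpa [div_eq_mul_inv] using hinv.const_mul_atTop_of_neg hc
      exact hFbot.comp harg
    · subst hc
      have hfun : (fun t : ℝ => F ((0:ℝ) / Real.sqrt (1 - t))) = fun _ => F 0 := by
        funext t; rw [zero_div]
      rw [hfun, if_neg (lt_irrefl (0:ℝ)), if_neg (lt_irrefl (0:ℝ)), ← hF0]
      exact tendsto_const_nhds
    · rw [if_pos hc]
      have harg : Tendsto (fun t : ℝ => c / Real.sqrt (1 - t))
          (nhdsWithin 1 (Set.Iio 1)) atTop := by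
        simpa [div_eq_mul_inv] using hinv.const_mul_atTop hc
      exact hFtop.comp harg
  -- the gaussian boundary term tends to 0
  have hA : ∀ y : ℝ, Tendsto (fun t : ℝ =>
      Real.sqrt ((1 - t) / (2 * Real.pi)) *
        (Real.exp (-(K + y) ^ 2 / (2 * (1 - t))) + Real.exp (-(K - y) ^ 2 / (2 * (1 - t)))
          - 2 * Real.exp (-y ^ 2 / (2 * (1 - t)))))
      (nhdsWithin 1 (Set.Iio 1)) (𝓝 0) := by
    intro y
    refine squeeze_zero_norm' (a := fun t : ℝ => Real.sqrt ((1 - t) / (2 * Real.pi)) * 4) ?_ ?_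
    · filter_upwards [self_mem_nhdsWithin] with t ht
      have h1t : 0 < 1 - t := sub_pos.mpr ht
      have hb : ∀ c : ℝ, Real.exp (-c ^ 2 / (2 * (1 - t))) ≤ 1 := by
        intro c
        rw [Real.exp_le_one_iff]
        apply div_nonpos_of_nonpos_of_nonneg
        · simpa using sq_nonneg c
        · positivity
      have hpos : ∀ c : ℝ, 0 < Real.exp (-c ^ 2 / (2 * (1 - t))) := fun c => Real.exp_pos _
      have hS : |Real.exp (-(K + y) ^ 2 / (2 * (1 - t))) + Real.exp (-(K - y) ^ 2 / (2 * (1 - t)))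
          - 2 * Real.exp (-y ^ 2 / (2 * (1 - t)))| ≤ 4 := by
        rw [abs_le]
        constructor
        · have := hb y; have := hpos (K + y); have := hpos (K - y); linarith
        · have := hb (K + y); have := hb (K - y); have := hpos y; linarith
      rw [norm_mul, Real.norm_eq_abs, Real.norm_eq_abs,
        abs_of_nonneg (Real.sqrt_nonneg _)]
      exact mul_le_mul_of_nonneg_left hS (Real.sqrt_nonneg _)
    · have hc : ContinuousAt (fun t : ℝ => Real.sqrt ((1 - t) / (2 * Real.pi))) 1 :=
        (Real.continuous_sqrt.comp ((continuous_const.sub continuous_id).div_const _)).continuousAt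
      have h0 : Tendsto (fun t : ℝ => Real.sqrt ((1 - t) / (2 * Real.pi)))
          (nhdsWithin 1 (Set.Iio 1)) (𝓝 0) := by
        have := hc.tendsto.mono_left (nhdsWithin_le_nhds (s := Set.Iio 1))
        simpa using this
      simpa using h0.mul_const 4
  -- combine
  intro y
  set L : ℝ → ℝ := fun c => if 0 < c then 1 else if c < 0 then 0 else 1/2 with hL
  have hfinal : Tendsto (fun t : ℝ =>
      Real.sqrt ((1 - t) / (2 * Real.pi)) *
          (Real.exp (-(K + y) ^ 2 / (2 * (1 - t))) + Real.exp (-(K - y) ^ 2 / (2 * (1 - t)))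
            - 2 * Real.exp (-y ^ 2 / (2 * (1 - t))))
        + (K + y) * (F (-y / Real.sqrt (1 - t)) - F ((-K - y) / Real.sqrt (1 - t)))
        + (K - y) * (F ((K - y) / Real.sqrt (1 - t)) - F (-y / Real.sqrt (1 - t))))
      (nhdsWithin 1 (Set.Iio 1))
      (𝓝 (0 + (K + y) * (L (-y) - L (-K - y)) + (K - y) * (L (K - y) - L (-y)))) := by
    exact ((hA y).add (((hFc (-y)).sub (hFc (-K - y))).const_mul (K + y))).add
      (((hFc (K - y)).sub (hFc (-y))).const_mul (K - y))
  have hL1 : ∀ c : ℝ, 0 < c → L c = 1 := by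
    intro c hc; simp only [hL]; rw [if_pos hc]
  have hL2 : ∀ c : ℝ, c < 0 → L c = 0 := by
    intro c hc; simp only [hL]; rw [if_neg (by linarith), if_pos hc]
  have hL3 : ∀ c : ℝ, c = 0 → L c = 1/2 := by
    intro c hc; subst hc; simp only [hL]
    rw [if_neg (lt_irrefl 0), if_neg (lt_irrefl 0)]
  have heq : phi y = 0 + (K + y) * (L (-y) - L (-K - y)) + (K - y) * (L (K - y) - L (-y)) := by
    rw [hphi y]
    rcases lt_trichotomy y (-K) with h1 | h1 | h1
    · rw [if_neg (by rintro ⟨h, _⟩; linarith), if_neg (by rintro ⟨h, _⟩; linarith)]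
      rw [hL1 (-y) (by linarith), hL1 (-K - y) (by linarith), hL1 (K - y) (by linarith)]
      ring
    · rw [if_neg (by rintro ⟨h, _⟩; linarith), if_neg (by rintro ⟨h, _⟩; linarith)]
      rw [hL1 (-y) (by linarith), hL3 (-K - y) (by linarith), hL1 (K - y) (by linarith)]
      have hky : K + y = 0 := by linarith
      rw [hky]; ring
    · rcases lt_trichotomy y 0 with h2 | h2 | h2
      · rw [if_pos ⟨h1, by linarith⟩]
        rw [hL1 (-y) (by linarith), hL2 (-K - y) (by linarith), hL1 (K - y) (by linarith)]
        ring
      · rw [if_pos ⟨h1, by linarith⟩]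
        rw [hL3 (-y) (by linarith), hL2 (-K - y) (by linarith), hL1 (K - y) (by linarith)]
        have h0 : y = 0 := h2
        rw [h0]; ring
      · rcases lt_trichotomy y K with h3 | h3 | h3
        · rw [if_neg (by rintro ⟨_, h⟩; linarith), if_pos ⟨h2, by linarith⟩]
          rw [hL2 (-y) (by linarith), hL2 (-K - y) (by linarith), hL1 (K - y) (by linarith)]
          ring
        · rw [if_neg (by rintro ⟨_, h⟩; linarith), if_pos ⟨h2, by linarith⟩]
          rw [hL2 (-y) (by linarith), hL2 (-K - y) (by linarith), hL3 (K - y) (by linarith)]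
          have hy : y = K := by linarith
          rw [hy]; ring
        · rw [if_neg (by rintro ⟨_, h⟩; linarith), if_neg (by rintro ⟨_, h⟩; linarith)]
          rw [hL2 (-y) (by linarith), hL2 (-K - y) (by linarith), hL2 (K - y) (by linarith)]
          ring
  rw [heq]
  apply hfinal.congr'
  filter_upwards [self_mem_nhdsWithin] with t ht
  exact (hU t y ht).symm
end

section
/- Let m ≥ 2, γ = m − 1, and T_k = T(1 − (1 − k/N)^{m−1}). Then there exists C > 0 (independent of N) such that Σ_{j=0}^{N−2} Δ_{T_{j+1}}^{(m+1)/2} (T − T_j)^{−m/2} ≤ C N^{−(m−1)/2} ln(N) for all N ≥ 2. -/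
lemma aux_pow_sub_pow (a b : ℝ) (ha : 0 ≤ a) (hab : a ≤ b) (n : ℕ) :
    b ^ n - a ^ n ≤ n * b ^ (n - 1) * (b - a) := by
  have hb : 0 ≤ b := ha.trans hab
  rw [← geom_sum₂_mul]
  have h1 : (∑ i ∈ Finset.range n, b ^ i * a ^ (n - 1 - i)) ≤ n * b ^ (n - 1) := by
    calc (∑ i ∈ Finset.range n, b ^ i * a ^ (n - 1 - i))
        ≤ ∑ _i ∈ Finset.range n, b ^ (n - 1) := by
          apply Finset.sum_le_sum
          intro i hi
          rw [Finset.mem_range] at hi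
          calc b ^ i * a ^ (n - 1 - i) ≤ b ^ i * b ^ (n - 1 - i) := by gcongr
            _ = b ^ (n - 1) := by rw [← pow_add]; congr 1; omega
      _ = n * b ^ (n - 1) := by rw [Finset.sum_const, Finset.card_range, nsmul_eq_mul]
  exact mul_le_mul_of_nonneg_right h1 (sub_nonneg.2 hab)

lemma aux_log (k : ℝ) (hk : 2 ≤ k) : k⁻¹ ≤ Real.log k - Real.log (k - 1) := by
  have h0 : 0 < k := by linarith
  have h1 : 0 < k - 1 := by linarith
  have h := Real.log_le_sub_one_of_pos (show 0 < (k - 1) / k by positivity)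
  rw [Real.log_div (by linarith) (ne_of_gt h0)] at h
  have h2 : (k - 1) / k - 1 = -k⁻¹ := by field_simp; ring
  rw [h2] at h
  linarith


/-- Let `m ≥ 2`, `γ = m - 1` and `T_k = T(1-(1-k/N)^{m-1})`.  Then there is `C > 0`
independent of `N` such that
`Σ_{j=0}^{N-2} Δ_{T_{j+1}}^{(m+1)/2} (T - T_j)^{-m/2} ≤ C N^{-(m-1)/2} ln N` for all `N ≥ 2`. -/
theorem stmt_17 (T : ℝ) (hT : 0 < T) (m : ℕ) (hm : 2 ≤ m) (γ : ℝ) (hγ : γ = (m : ℝ) - 1)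
    (Tk : ℕ → ℕ → ℝ)
    (hTk : ∀ N k, Tk N k = T * (1 - (1 - (k : ℝ) / (N : ℝ)) ^ γ)) :
    ∃ C : ℝ, 0 < C ∧ ∀ N : ℕ, 2 ≤ N →
      ∑ j ∈ Finset.range (N - 1),
          (Tk N (j + 1) - Tk N j) ^ (((m : ℝ) + 1) / 2) * (T - Tk N j) ^ (-(m : ℝ) / 2)
        ≤ C * (N : ℝ) ^ (-((m : ℝ) - 1) / 2) * Real.log N := by
  set q : ℝ := (m : ℝ) with hq
  have hq2 : (2 : ℝ) ≤ q := by rw [hq]; exact_mod_cast hm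
  have hg : (0 : ℝ) < q - 1 := by linarith
  set p : ℝ := (q + 1) / 2 with hp
  refine ⟨T ^ ((1:ℝ)/2) * (q - 1) ^ p, by positivity, ?_⟩
  intro N hN
  set C : ℝ := T ^ ((1:ℝ)/2) * (q - 1) ^ p with hC
  have hCpos : 0 < C := by positivity
  have hn0 : (0 : ℝ) < (N : ℝ) := by positivity
  set n : ℝ := (N : ℝ) with hn
  have hn2 : (2 : ℝ) ≤ n := by rw [hn]; exact_mod_cast hN
  -- exponent fact
  have hγn : γ = ((m - 1 : ℕ) : ℝ) := by
    rw [hγ]; push_cast [Nat.cast_sub (by omega : 1 ≤ m)]; ring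
  set f : ℕ → ℝ := fun j => Real.log (n - j) with hf
  have key : ∀ j ∈ Finset.range (N - 1),
      (Tk N (j + 1) - Tk N j) ^ p * (T - Tk N j) ^ (-q / 2)
        ≤ C * n ^ (-(q - 1) / 2) * (f j - f (j + 1)) := by
    intro j hj
    rw [Finset.mem_range] at hj
    have hjN : (j : ℝ) + 2 ≤ n := by
      have h : j + 2 ≤ N := by omega
      rw [hn]; exact_mod_cast h
    set x : ℝ := 1 - (j : ℝ) / n with hxdef
    set y : ℝ := 1 - ((j : ℝ) + 1) / n with hydef
    have hx0 : 0 < x := by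
      rw [hxdef]; rw [sub_pos, div_lt_one hn0]; linarith
    have hy0 : 0 < y := by
      rw [hydef]; rw [sub_pos, div_lt_one hn0]; linarith
    have hxy : y ≤ x := by
      rw [hxdef, hydef]
      have : (j : ℝ) / n ≤ ((j : ℝ) + 1) / n := (div_le_div_iff_of_pos_right hn0).2 (by linarith)
      linarith
    have hxsub : x - y = n⁻¹ := by
      rw [hxdef, hydef]; field_simp; ring
    have hxval : x = (n - j) / n := by rw [hxdef]; field_simp
    -- rewrite Tk
    have hTk1 : Tk N (j + 1) - Tk N j = T * (x ^ (m - 1) - y ^ (m - 1)) := by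
      rw [hTk, hTk, hγn, Real.rpow_natCast, Real.rpow_natCast]
      push_cast
      rw [← hn, ← hxdef, ← hydef]
      ring
    have hTk2 : T - Tk N j = T * x ^ (m - 1) := by
      rw [hTk, hγn, Real.rpow_natCast, ← hn, ← hxdef]; ring
    -- step A: MVT-type bound
    have hA : Tk N (j + 1) - Tk N j ≤ T * ((q - 1) * x ^ (m - 2) * n⁻¹) := by
      rw [hTk1]
      have := aux_pow_sub_pow y x hy0.le hxy (m - 1)
      have hcast : ((m - 1 : ℕ) : ℝ) = q - 1 := by
        push_cast [Nat.cast_sub (by omega : 1 ≤ m)]; ring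
      rw [hcast, hxsub] at this
      have hmm : m - 1 - 1 = m - 2 := by omega
      rw [hmm] at this
      have := mul_le_mul_of_nonneg_left this hT.le
      linarith [this]
    have hΔ0 : 0 ≤ Tk N (j + 1) - Tk N j := by
      rw [hTk1]
      have : y ^ (m - 1) ≤ x ^ (m - 1) := pow_le_pow_left₀ hy0.le hxy _
      nlinarith [hT.le]
    -- step B: rpow of bound
    have hB : (Tk N (j + 1) - Tk N j) ^ p ≤ (T * ((q - 1) * x ^ (m - 2) * n⁻¹)) ^ p := by
      apply Real.rpow_le_rpow hΔ0 hA (by positivity)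
    -- main equality
    have hEq : (T * ((q - 1) * x ^ (m - 2) * n⁻¹)) ^ p * (T * x ^ (m - 1)) ^ (-q / 2)
        = C * n ^ (-(q - 1) / 2) * (n - (j : ℝ))⁻¹ := by
      have hxm2 : 0 ≤ x ^ (m - 2) := by positivity
      have ha : ((m - 2 : ℕ) : ℝ) = q - 2 := by
        push_cast [Nat.cast_sub (by omega : 2 ≤ m)]; ring
      have hb : ((m - 1 : ℕ) : ℝ) = q - 1 := by
        push_cast [Nat.cast_sub (by omega : 1 ≤ m)]; ring
      rw [Real.mul_rpow hT.le (by positivity), Real.mul_rpow (by positivity) (by positivity),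
        Real.mul_rpow hg.le hxm2, Real.mul_rpow hT.le (by positivity)]
      rw [← Real.rpow_natCast x (m - 2), ← Real.rpow_natCast x (m - 1),
        ← Real.rpow_mul hx0.le, ← Real.rpow_mul hx0.le,
        Real.inv_rpow hn0.le, ← Real.rpow_neg hn0.le]
      have hxinv : x ^ (((m - 2 : ℕ) : ℝ) * p) * x ^ (((m - 1 : ℕ) : ℝ) * (-q / 2))
          = x ^ (-1 : ℝ) := by
        rw [← Real.rpow_add hx0]
        congr 1
        rw [ha, hb, hp]; ring
      have hTcomb : T ^ p * T ^ (-q / 2) = T ^ ((1:ℝ)/2) := by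
        rw [← Real.rpow_add hT]
        congr 1
        rw [hp]; ring
      have hncomb : n ^ (-p) * n = n ^ (-(q - 1) / 2) := by
        nth_rewrite 2 [← Real.rpow_one n]
        rw [← Real.rpow_add hn0]
        congr 1
        rw [hp]; ring
      have hxinv' : x ^ (-1 : ℝ) = n * (n - j)⁻¹ := by
        rw [Real.rpow_neg_one, hxval]
        rw [inv_div]
        ring
      calc T ^ p * ((q - 1) ^ p * x ^ (((m-2:ℕ):ℝ) * p) * n ^ (-p)) *
            (T ^ (-q/2) * x ^ (((m-1:ℕ):ℝ) * (-q/2)))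
          = (T ^ p * T ^ (-q/2)) * (q - 1) ^ p *
            (x ^ (((m-2:ℕ):ℝ) * p) * x ^ (((m-1:ℕ):ℝ) * (-q/2))) * n ^ (-p) := by ring
        _ = T ^ ((1:ℝ)/2) * (q - 1) ^ p * (x ^ (-1:ℝ)) * n ^ (-p) := by rw [hTcomb, hxinv]
        _ = C * (n ^ (-p) * n) * (n - j)⁻¹ := by rw [hxinv', hC]; ring
        _ = C * n ^ (-(q - 1) / 2) * (n - (j : ℝ))⁻¹ := by rw [hncomb]
    -- log bound
    have hfj : f j = Real.log (n - (j : ℝ)) := rfl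
    have hfj1 : f (j + 1) = Real.log ((n - (j : ℝ)) - 1) := by
      simp only [hf]
      push_cast
      ring_nf
    have hlog : (n - (j : ℝ))⁻¹ ≤ f j - f (j + 1) := by
      rw [hfj, hfj1]
      exact aux_log (n - (j : ℝ)) (by linarith)
    have hpow0 : 0 ≤ (T - Tk N j) ^ (-q / 2) :=
      Real.rpow_nonneg (by rw [hTk2]; positivity) _
    calc (Tk N (j + 1) - Tk N j) ^ p * (T - Tk N j) ^ (-q / 2)
        ≤ (T * ((q - 1) * x ^ (m - 2) * n⁻¹)) ^ p * (T - Tk N j) ^ (-q / 2) :=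
          mul_le_mul_of_nonneg_right hB hpow0
      _ = C * n ^ (-(q - 1) / 2) * (n - (j : ℝ))⁻¹ := by rw [hTk2, hEq]
      _ ≤ C * n ^ (-(q - 1) / 2) * (f j - f (j + 1)) := by
          apply mul_le_mul_of_nonneg_left hlog
          positivity
  calc ∑ j ∈ Finset.range (N - 1),
        (Tk N (j + 1) - Tk N j) ^ p * (T - Tk N j) ^ (-q / 2)
      ≤ ∑ j ∈ Finset.range (N - 1), C * n ^ (-(q - 1) / 2) * (f j - f (j + 1)) :=
        Finset.sum_le_sum key
    _ = C * n ^ (-(q - 1) / 2) * ∑ j ∈ Finset.range (N - 1), (f j - f (j + 1)) := by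
        rw [← Finset.mul_sum]
    _ = C * n ^ (-(q - 1) / 2) * (f 0 - f (N - 1)) := by
        rw [Finset.sum_range_sub' f (N - 1)]
    _ = C * n ^ (-(q - 1) / 2) * Real.log n := by
        congr 1
        simp only [hf]
        rw [Nat.cast_sub (by omega : 1 ≤ N)]
        rw [← hn]; norm_num
end
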